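/- Let 𝔽q, F, v, R, Λ be as in the context and suppose Λ is generated by m positive integers λ1 < … < λm. If φ1, …, φn : R → 𝔽q are pairwise distinct 𝔽q-algebra homomorphisms, then n ≤ q^m. (In the function-field situation: a function field over 𝔽q with a rational place whose Weierstrass semigroup is generated by m elements has at most q^m + 1 rational places.) -/

import Mathlib

/-- With `Fq`, `F`, `v`, `R`, `Λ` as in the context and `Λ`
generated by `m` positive integers `λ 0 < … < λ (m-1)`, if
`φ 1, …, φ n : R → Fq` are pairwise distinct `Fq`-algebra homomorphisms then
`n ≤ q ^ m`. -/
theorem rational_places_le_q_pow_m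
    {Fq : Type*} [Field Fq] [Fintype Fq]
    {F : Type*} [Field F] [Algebra Fq F]
    (q : ℕ) (hq : q = Fintype.card Fq)
    (v : F → WithTop ℤ)
    (hv_mul : ∀ f g : F, v (f * g) = v f + v g)
    (hv_add : ∀ f g : F, min (v f) (v g) ≤ v (f + g))
    (hv_top : ∀ f : F, v f = ⊤ ↔ f = 0)
    (hv_const : ∀ c : Fq, c ≠ 0 → v (algebraMap Fq F c) = 0)
    (hv_res : ∀ f : F, 0 ≤ v f → ∃ c : Fq, 0 < v (f - algebraMap Fq F c))
    (R : Subalgebra Fq F)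
    (hR : ∀ f ∈ R, f ≠ 0 → v f ≤ 0)
    (Λ : Set ℕ)
    (hΛ : Λ = {n : ℕ | ∃ f ∈ R, f ≠ 0 ∧ v f = ((-(n : ℤ) : ℤ) : WithTop ℤ)})
    (hgaps : (Λᶜ : Set ℕ).Finite)
    (m : ℕ) (lam : Fin m → ℕ)
    (hlam_pos : ∀ i, 0 < lam i)
    (hlam_mono : StrictMono lam)
    (hgen : Λ = {n : ℕ | ∃ a : Fin m → ℕ, n = ∑ i, a i * lam i})
    (n : ℕ) (φ : Fin n → (R →ₐ[Fq] Fq))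
    (hφ : Function.Injective φ) :
    n ≤ q ^ m := by
  classical
  have hv1 : v 1 = 0 := by simpa using hv_const 1 one_ne_zero
  have hlamΛ : ∀ i, (lam i : ℕ) ∈ Λ := by
    intro i
    rw [hgen]
    refine ⟨Pi.single i 1, ?_⟩
    simp [Pi.single_apply, ite_mul]
  have hfex : ∀ i, ∃ f ∈ R, f ≠ 0 ∧ v f = ((-(lam i : ℤ) : ℤ) : WithTop ℤ) := by
    intro i
    have := hlamΛ i
    rw [hΛ] at this
    exact this
  choose f hfR hf0 hfv using hfex
  set S : Subalgebra Fq F := Algebra.adjoin Fq (Set.range f) with hS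
  have hSR : S ≤ R := Algebra.adjoin_le (by rintro _ ⟨i, rfl⟩; exact hfR i)
  have hv_pow : ∀ (g : F) (k : ℕ) (x : ℤ), v g = (x : WithTop ℤ) →
      v (g ^ k) = ((k * x : ℤ) : WithTop ℤ) := by
    intro g k x hx
    induction k with
    | zero => simpa using hv1
    | succ k ih =>
      rw [pow_succ, hv_mul, ih, hx, ← WithTop.coe_add]
      congr 1
      push_cast
      ring
  have hv_prod : ∀ (a : Fin m → ℕ),
      v (∏ i, f i ^ a i) = ((-(∑ i, a i * lam i : ℕ) : ℤ) : WithTop ℤ) := by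
    intro a
    have : ∀ s : Finset (Fin m),
        v (∏ i ∈ s, f i ^ a i) = ((-(∑ i ∈ s, a i * lam i : ℕ) : ℤ) : WithTop ℤ) := by
      intro s
      induction s using Finset.induction with
      | empty => simpa using hv1
      | insert b s' hx ih =>
        rw [Finset.prod_insert hx, Finset.sum_insert hx, hv_mul, ih,
          hv_pow (f b) (a b) (-(lam b : ℤ)) (hfv b), ← WithTop.coe_add]
        congr 1
        push_cast
        ring
    exact this Finset.univ
  have key : ∀ N : ℕ, ∀ g ∈ R, v g = ((-(N : ℤ) : ℤ) : WithTop ℤ) → g ∈ S := by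
    intro N
    induction N using Nat.strong_induction_on with
    | _ N ih =>
      intro g hgR hgv
      have hg0 : g ≠ 0 := by
        intro h
        rw [h, (hv_top (0:F)).mpr rfl] at hgv
        exact (WithTop.coe_ne_top (a := (-(N:ℤ)))) hgv.symm
      have hNΛ : N ∈ Λ := by rw [hΛ]; exact ⟨g, hgR, hg0, hgv⟩
      rcases N.eq_zero_or_pos with hN0 | hNpos
      · subst hN0
        obtain ⟨c, hc⟩ := hv_res g (by rw [hgv]; simp)
        have hgc : g - algebraMap Fq F c ∈ R := sub_mem hgR (R.algebraMap_mem c)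
        have hz : g - algebraMap Fq F c = 0 := by
          by_contra h
          exact absurd (lt_of_lt_of_le hc (hR _ hgc h)) (lt_irrefl _)
        have : g = algebraMap Fq F c := by rw [← sub_eq_zero]; exact hz
        rw [this]
        exact S.algebraMap_mem c
      · rw [hgen] at hNΛ
        obtain ⟨a, ha⟩ := hNΛ
        set h : F := ∏ i, f i ^ a i with hh
        have hhv : v h = ((-(N : ℤ) : ℤ) : WithTop ℤ) := by rw [hh, hv_prod, ← ha]
        have hh0 : h ≠ 0 := by
          intro h0
          rw [h0, (hv_top (0:F)).mpr rfl] at hhv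
          exact (WithTop.coe_ne_top (a := (-(N:ℤ)))) hhv.symm
        have hhS : h ∈ S := by
          refine Subalgebra.prod_mem _ fun i _ => Subalgebra.pow_mem _ ?_ _
          exact Algebra.subset_adjoin ⟨i, rfl⟩
        have hhR : h ∈ R := hSR hhS
        have hinv : v h⁻¹ = ((N : ℤ) : WithTop ℤ) := by
          have h1 : v h + v h⁻¹ = 0 := by rw [← hv_mul, mul_inv_cancel₀ hh0, hv1]
          have hinv0 : h⁻¹ ≠ 0 := inv_ne_zero hh0
          obtain ⟨y, hy⟩ := WithTop.ne_top_iff_exists.mp (fun ht => hinv0 ((hv_top _).mp ht))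
          rw [hhv, ← hy, ← WithTop.coe_add] at h1
          rw [← hy]
          have h2 : (-(N:ℤ)) + y = 0 := by exact_mod_cast h1
          congr 1
          omega
        have hw : v (g * h⁻¹) = 0 := by
          rw [hv_mul, hgv, hinv, ← WithTop.coe_add]
          norm_num
        obtain ⟨c, hc⟩ := hv_res (g * h⁻¹) (le_of_eq hw.symm)
        set g' : F := g - algebraMap Fq F c * h with hg'
        have hfact : g' = (g * h⁻¹ - algebraMap Fq F c) * h := by
          rw [hg']
          field_simp
        have hg'R : g' ∈ R := sub_mem hgR (mul_mem (R.algebraMap_mem c) hhR)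
        by_cases hz : g' = 0
        · have : g = algebraMap Fq F c * h := by rw [← sub_eq_zero]; exact hz
          rw [this]; exact mul_mem (S.algebraMap_mem c) hhS
        · have hw0 : g * h⁻¹ - algebraMap Fq F c ≠ 0 := by
            intro h0
            apply hz
            rw [hfact, h0, zero_mul]
          obtain ⟨x, hx⟩ := WithTop.ne_top_iff_exists.mp (fun ht => hw0 ((hv_top _).mp ht))
          have hxpos : 0 < x := by
            rw [← hx] at hc
            exact_mod_cast hc
          have hg'v : v g' = ((x - N : ℤ) : WithTop ℤ) := by
            rw [hfact, hv_mul, ← hx, hhv, ← WithTop.coe_add]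
            congr 1 <;> omega
          have hle : v g' ≤ 0 := hR _ hg'R hz
          have hxN : x ≤ N := by
            rw [hg'v] at hle
            have : (x - N : ℤ) ≤ 0 := by exact_mod_cast hle
            omega
          have hg'S : g' ∈ S := by
            apply ih (N - x).toNat (by omega) g' hg'R
            rw [hg'v]
            congr 1
            omega
          have : g = g' + algebraMap Fq F c * h := by rw [hg']; ring
          rw [this]
          exact add_mem hg'S (mul_mem (S.algebraMap_mem c) hhS)
  have hRS : ∀ g ∈ R, g ∈ S := by
    intro g hg
    by_cases hz : g = 0
    · rw [hz]; exact S.zero_mem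
    · obtain ⟨x, hx⟩ := WithTop.ne_top_iff_exists.mp (fun ht => hz ((hv_top _).mp ht))
      have hle : v g ≤ 0 := hR g hg hz
      have hx0 : x ≤ 0 := by
        rw [← hx] at hle
        exact_mod_cast hle
      exact key (-x).toNat g hg (by rw [← hx]; congr 1; omega)
  set fi : Fin m → R := fun i => ⟨f i, hfR i⟩ with hfi
  have hT : ∀ x : R, x ∈ Algebra.adjoin Fq (Set.range fi) := by
    intro x
    have hx : (x : F) ∈ S := hRS x x.2
    have himg : Set.range f = R.val '' Set.range fi := by
      rw [← Set.range_comp]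
      rfl
    rw [hS, himg, ← AlgHom.map_adjoin] at hx
    obtain ⟨y, hy, hyx⟩ := hx
    have : y = x := Subtype.ext hyx
    rwa [← this]
  have hinj : Function.Injective (fun k (i : Fin m) => φ k (fi i)) := by
    intro k k' hkk
    apply hφ
    apply AlgHom.ext
    intro x
    have hle : Algebra.adjoin Fq (Set.range fi) ≤ AlgHom.equalizer (φ k) (φ k') := by
      apply Algebra.adjoin_le
      rintro _ ⟨i, rfl⟩
      exact congrFun hkk i
    exact hle (hT x)
  calc n = Fintype.card (Fin n) := (Fintype.card_fin n).symm
    _ ≤ Fintype.card (Fin m → Fq) := Fintype.card_le_of_injective _ hinj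
    _ = q ^ m := by simp [hq]
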